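/- Fix i ∈ {1,…,N}. Let (ξ_1,…,ξ_N) be a tangent solution with ξ_i nowhere vanishing, (H_1,…,H_N) a Lamé solution, and Ω : ℤ^N → ℝ a potential satisfying Δ_k Ω = ξ_k·(T_k H_k) for all k = 1,…,N. Define H_i[1] := −Ω/ξ_i, H_k[1] := H_k − Q_{ik}·Ω/ξ_i for k ≠ i, and Q_{ki}[1] := −ξ_k/ξ_i for k ≠ i. Then for every k ≠ i: Δ_k H_i[1] = Q_{ki}[1]·(T_k H_k[1]). -/

import Mathlib

noncomputable section

/-- Shift operator `T_j`: `(T_j f)(n) = f(n + e_j)`. -/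
def T {N : ℕ} (j : Fin N) (f : (Fin N → ℤ) → ℝ) : (Fin N → ℤ) → ℝ :=
  fun n => f (n + Pi.single j 1)

/-- Difference operator `Δ_j = T_j − 1`. -/
def Δ {N : ℕ} (j : Fin N) (f : (Fin N → ℤ) → ℝ) : (Fin N → ℤ) → ℝ :=
  fun n => f (n + Pi.single j 1) - f n

/-- Levy transformation in the `i`-th direction, Lamé coefficients: for every `k ≠ i`,
`Δ_k H_i[1] = Q_{ki}[1]·(T_k H_k[1])` with `H_i[1] = −Ω/ξ_i`,
`H_k[1] = H_k − Q_{ik}·Ω/ξ_i` and `Q_{ki}[1] = −ξ_k/ξ_i`, where `Ω` is the potential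
with `Δ_k Ω = ξ_k·(T_k H_k)`. -/
theorem statement_6 (N : ℕ) (hN : 2 ≤ N)
    (Q : Fin N → Fin N → (Fin N → ℤ) → ℝ)
    (i : Fin N)
    (ξ H : Fin N → (Fin N → ℤ) → ℝ)
    (hξ : ∀ j k : Fin N, j ≠ k → Δ k (ξ j) = T k (Q j k) * ξ k)
    (hH : ∀ j k : Fin N, j ≠ k → Δ j (H k) = Q j k * T j (H j))
    (hξi : ∀ n : Fin N → ℤ, ξ i n ≠ 0)
    (Ω : (Fin N → ℤ) → ℝ)
    (hΩ : ∀ k : Fin N, Δ k Ω = ξ k * T k (H k)) :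
    ∀ k : Fin N, k ≠ i →
      Δ k (-(Ω / ξ i))
        = (-(ξ k / ξ i)) * T k (H k - Q i k * Ω / ξ i) := by
  intro k hk
  funext n
  have h1 := congrFun (hΩ k) n
  have h2 := congrFun (hξ i k (Ne.symm hk)) n
  simp only [Δ, T, Pi.mul_apply, Pi.sub_apply, Pi.div_apply, Pi.neg_apply] at h1 h2 ⊢
  have e1 : Ω (n + Pi.single k 1) = Ω n + ξ k n * H k (n + Pi.single k 1) := by linarith
  have e2 : ξ i (n + Pi.single k 1) = ξ i n + Q i k (n + Pi.single k 1) * ξ k n := by linarith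
  rw [e1, e2]
  have h3 := hξi n
  have h4 : ξ i n + Q i k (n + Pi.single k 1) * ξ k n ≠ 0 := by rw [← e2]; exact hξi _
  have h5 : ξ i n + ξ k n * Q i k (n + Pi.single k 1) ≠ 0 := by rw [mul_comm]; exact h4
  field_simp
  ring
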